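/- Let a > 0, b ∈ ℝ, c > 0. A Borel probability measure μ on (0,∞) has density k_{a,b,c} (with respect to Lebesgue measure) if and only if for every differentiable function f : (0,∞) → ℝ satisfying lim_{x→0⁺} x(1+x) k_{a,b,c}(x) f(x) = 0 and lim_{x→∞} x(1+x) k_{a,b,c}(x) f(x) = 0 and such that x ↦ x(1+x)f′(x) + ((1−b)x − c x(1+x) + a) f(x) is μ-integrable, one has ∫₀^∞ ( x(1+x) f′(x) + ((1−b)x − c x(1+x) + a) f(x) ) dμ(x) = 0. -/

import Mathlib

open MeasureTheory Set Filter Real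

/-- The Kummer density with parameters `a > 0`, `b ∈ ℝ`, `c > 0`
(normalized by its total mass). -/
noncomputable def kummerDensity (a b c : ℝ) (x : ℝ) : ℝ :=
  (∫ t in Set.Ioi (0 : ℝ), t ^ (a - 1) * (1 + t) ^ (-a - b) * Real.exp (-(c * t)))⁻¹ *
    (x ^ (a - 1) * (1 + x) ^ (-a - b) * Real.exp (-(c * x)))

open scoped ENNReal NNReal

namespace KummerAux

/-- The unnormalized Kummer density. -/
noncomputable def KK (a b c : ℝ) (x : ℝ) : ℝ :=
  x ^ (a - 1) * (1 + x) ^ (-a - b) * Real.exp (-(c * x))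

lemma kummerDensity_eq (a b c x : ℝ) :
    kummerDensity a b c x = (∫ t in Set.Ioi (0 : ℝ), KK a b c t)⁻¹ * KK a b c x := rfl

lemma KK_meas (a b c : ℝ) : Measurable (KK a b c) := by
  unfold KK; fun_prop

lemma KK_pos {a b c x : ℝ} (hx : 0 < x) : 0 < KK a b c x :=
  mul_pos (mul_pos (rpow_pos_of_pos hx _) (rpow_pos_of_pos (by linarith) _)) (exp_pos _)

lemma KK_contAt {a b c x : ℝ} (hx : 0 < x) : ContinuousAt (KK a b c) x := by
  have h1 : ContinuousAt (fun y : ℝ => y ^ (a - 1)) x :=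
    Real.continuousAt_rpow_const x _ (Or.inl hx.ne')
  have h2 : ContinuousAt (fun y : ℝ => (1 + y) ^ (-a - b)) x := by
    have : ContinuousAt (fun y : ℝ => y ^ (-a - b)) (1 + x) :=
      Real.continuousAt_rpow_const _ _ (Or.inl (by linarith))
    exact this.comp (by fun_prop)
  have h3 : ContinuousAt (fun y : ℝ => Real.exp (-(c * y))) x := by fun_prop
  exact (h1.mul h2).mul h3

lemma one_le_two_rpow_abs (q : ℝ) : (1 : ℝ) ≤ 2 ^ |q| := by
  calc (1 : ℝ) = 2 ^ (0 : ℝ) := (rpow_zero 2).symm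
    _ ≤ 2 ^ |q| := rpow_le_rpow_of_exponent_le one_le_two (abs_nonneg q)

lemma rpow_le_two_abs {q y : ℝ} (h1 : 1 ≤ y) (h2 : y ≤ 2) : y ^ q ≤ 2 ^ |q| := by
  rcases le_total 0 q with hq | hq
  · calc y ^ q ≤ 2 ^ q := rpow_le_rpow (by linarith) h2 hq
      _ ≤ 2 ^ |q| := rpow_le_rpow_of_exponent_le one_le_two (le_abs_self q)
  · calc y ^ q ≤ 1 := rpow_le_one_of_one_le_of_nonpos h1 hq
      _ ≤ 2 ^ |q| := one_le_two_rpow_abs q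

lemma one_add_rpow_le {q y : ℝ} (h1 : 1 ≤ y) : (1 + y) ^ q ≤ 2 ^ |q| * y ^ |q| := by
  have hy : (0 : ℝ) < y := lt_of_lt_of_le one_pos h1
  have hy1 : (1 : ℝ) ≤ y ^ |q| := by
    calc (1 : ℝ) = y ^ (0 : ℝ) := (rpow_zero y).symm
      _ ≤ y ^ |q| := rpow_le_rpow_of_exponent_le h1 (abs_nonneg q)
  rcases le_total 0 q with hq | hq
  · calc (1 + y) ^ q ≤ (2 * y) ^ q := rpow_le_rpow (by linarith) (by linarith) hq
      _ = 2 ^ q * y ^ q := mul_rpow (by norm_num) hy.le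
      _ ≤ 2 ^ |q| * y ^ |q| :=
        mul_le_mul (rpow_le_rpow_of_exponent_le one_le_two (le_abs_self q))
          (rpow_le_rpow_of_exponent_le h1 (le_abs_self q)) (rpow_nonneg hy.le q)
          (rpow_nonneg (by norm_num) _)
  · calc (1 + y) ^ q ≤ y ^ q := rpow_le_rpow_of_nonpos hy (by linarith) hq
      _ ≤ 1 := rpow_le_one_of_one_le_of_nonpos h1 hq
      _ ≤ 2 ^ |q| * y ^ |q| := by nlinarith [one_le_two_rpow_abs q]

lemma KK_integrableOn {a b c : ℝ} (ha : 0 < a) (hc : 0 < c) :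
    IntegrableOn (KK a b c) (Ioi 0) := by
  have h1 : IntegrableOn (KK a b c) (Ioc 0 1) := by
    have hbound : IntegrableOn (fun t : ℝ => 2 ^ |(-a - b)| * t ^ (a - 1)) (Ioc 0 1) := by
      exact Integrable.const_mul
        ((intervalIntegrable_iff_integrableOn_Ioc_of_le zero_le_one).mp
          (intervalIntegral.intervalIntegrable_rpow' (by linarith))) _
    apply hbound.mono' ((KK_meas a b c).aestronglyMeasurable)
    filter_upwards [ae_restrict_mem measurableSet_Ioc] with t ht
    have ht0 : (0 : ℝ) < t := ht.1
    rw [Real.norm_eq_abs, abs_of_pos (KK_pos ht0)]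
    unfold KK
    have e1 : (1 + t) ^ (-a - b) ≤ 2 ^ |(-a - b)| :=
      rpow_le_two_abs (by linarith) (by linarith [ht.2])
    have e2 : Real.exp (-(c * t)) ≤ 1 := by
      rw [Real.exp_le_one_iff]; nlinarith
    have p1 : (0 : ℝ) < t ^ (a - 1) := rpow_pos_of_pos ht0 _
    have p2 : (0 : ℝ) < (1 + t) ^ (-a - b) := rpow_pos_of_pos (by linarith) _
    calc t ^ (a - 1) * (1 + t) ^ (-a - b) * Real.exp (-(c * t))
        ≤ t ^ (a - 1) * (1 + t) ^ (-a - b) * 1 := by nlinarith [mul_pos p1 p2]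
      _ = t ^ (a - 1) * (1 + t) ^ (-a - b) := by ring
      _ ≤ t ^ (a - 1) * 2 ^ |(-a - b)| := by nlinarith
      _ = 2 ^ |(-a - b)| * t ^ (a - 1) := by ring
  have h2 : IntegrableOn (KK a b c) (Ioi 1) := by
    apply integrable_of_isBigO_exp_neg (half_pos hc)
    · intro x hx
      exact (KK_contAt (lt_of_lt_of_le one_pos hx)).continuousWithinAt
    · rw [Asymptotics.isBigO_iff]
      refine ⟨2 ^ |(-a - b)|, ?_⟩
      have hev : ∀ᶠ x : ℝ in atTop,
          x ^ (a - 1 + |(-a - b)|) * Real.exp (-(c / 2) * x) < 1 :=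
        (tendsto_rpow_mul_exp_neg_mul_atTop_nhds_zero (a - 1 + |(-a - b)|) (c / 2)
          (half_pos hc)).eventually_lt_const one_pos
      filter_upwards [eventually_ge_atTop (1 : ℝ), hev] with x hx hlt
      have hx0 : (0 : ℝ) < x := lt_of_lt_of_le one_pos hx
      rw [Real.norm_eq_abs, Real.norm_eq_abs, abs_of_pos (KK_pos hx0),
        abs_of_pos (exp_pos _)]
      have e1 : (1 + x) ^ (-a - b) ≤ 2 ^ |(-a - b)| * x ^ |(-a - b)| := one_add_rpow_le hx
      have e3 : x ^ (a - 1) * x ^ |(-a - b)| = x ^ (a - 1 + |(-a - b)|) :=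
        (Real.rpow_add hx0 _ _).symm
      have hsplit : Real.exp (-(c * x)) = Real.exp (-(c / 2) * x) * Real.exp (-(c / 2) * x) := by
        rw [← Real.exp_add]; ring_nf
      have p1 : (0 : ℝ) < x ^ (a - 1) := rpow_pos_of_pos hx0 _
      have p2 : (0 : ℝ) < Real.exp (-(c * x)) := exp_pos _
      have p3 : (0 : ℝ) < Real.exp (-(c / 2) * x) := exp_pos _
      have p4 : (0 : ℝ) < (2 : ℝ) ^ |(-a - b)| := rpow_pos_of_pos two_pos _
      calc KK a b c x = x ^ (a - 1) * (1 + x) ^ (-a - b) * Real.exp (-(c * x)) := rfl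
        _ ≤ x ^ (a - 1) * (2 ^ |(-a - b)| * x ^ |(-a - b)|) * Real.exp (-(c * x)) :=
            mul_le_mul_of_nonneg_right (mul_le_mul_of_nonneg_left e1 p1.le) p2.le
        _ = 2 ^ |(-a - b)| * (x ^ (a - 1) * x ^ |(-a - b)|) * Real.exp (-(c * x)) := by ring
        _ = 2 ^ |(-a - b)| * (x ^ (a - 1 + |(-a - b)|) * Real.exp (-(c / 2) * x))
              * Real.exp (-(c / 2) * x) := by rw [e3, hsplit]; ring
        _ ≤ 2 ^ |(-a - b)| * 1 * Real.exp (-(c / 2) * x) := by nlinarith [mul_pos p4 p3]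
        _ = 2 ^ |(-a - b)| * Real.exp (-(c / 2) * x) := by ring
  have := h1.union h2
  rwa [Ioc_union_Ioi_eq_Ioi zero_le_one] at this

lemma L_pos {a b c : ℝ} (ha : 0 < a) (hc : 0 < c) :
    0 < ∫ t in Ioi (0 : ℝ), KK a b c t := by
  rw [setIntegral_pos_iff_support_of_nonneg_ae ?_ (KK_integrableOn ha hc)]
  · refine lt_of_lt_of_le ?_ (measure_mono (?_ : Ioi (0:ℝ) ⊆ _))
    · rw [Real.volume_Ioi]; exact ENNReal.zero_lt_top
    · intro x hx
      exact ⟨ne_of_gt (KK_pos hx), hx⟩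
  · filter_upwards [ae_restrict_mem measurableSet_Ioi] with t ht
    exact (KK_pos ht).le

lemma kd_meas (a b c : ℝ) : Measurable (kummerDensity a b c) := by
  have := KK_meas a b c
  unfold kummerDensity
  fun_prop

lemma kd_pos {a b c : ℝ} (ha : 0 < a) (hc : 0 < c) {x : ℝ} (hx : 0 < x) :
    0 < kummerDensity a b c x := by
  rw [kummerDensity_eq]
  exact mul_pos (inv_pos.mpr (L_pos ha hc)) (KK_pos hx)

lemma kd_contAt {a b c x : ℝ} (hx : 0 < x) : ContinuousAt (kummerDensity a b c) x := by
  have : kummerDensity a b c = fun y =>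
      (∫ t in Set.Ioi (0 : ℝ), KK a b c t)⁻¹ * KK a b c y := rfl
  rw [this]
  exact (KK_contAt hx).const_mul _

lemma kd_integrableOn {a b c : ℝ} (ha : 0 < a) (hc : 0 < c) :
    IntegrableOn (kummerDensity a b c) (Ioi 0) := by
  have := (KK_integrableOn (b := b) ha hc).const_mul
      (∫ t in Set.Ioi (0 : ℝ), KK a b c t)⁻¹
  exact this.congr (by filter_upwards with x using (kummerDensity_eq a b c x).symm)

lemma kd_integral_one {a b c : ℝ} (ha : 0 < a) (hc : 0 < c) :
    ∫ x in Ioi (0 : ℝ), kummerDensity a b c x = 1 := by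
  have : ∫ x in Ioi (0 : ℝ), kummerDensity a b c x =
      (∫ t in Set.Ioi (0 : ℝ), KK a b c t)⁻¹ * ∫ t in Ioi (0 : ℝ), KK a b c t := by
    rw [← MeasureTheory.integral_const_mul]; rfl
  rw [this, inv_mul_cancel₀ (L_pos ha hc).ne']

/-- The crucial derivative computation: `(x(1+x)k(x))' = (a + (1-b)x - cx(1+x)) k(x)`. -/
lemma hasDerivAt_g {a b c : ℝ} {x : ℝ} (hx : 0 < x) :
    HasDerivAt (fun y => y * (1 + y) * kummerDensity a b c y)
      ((a + (1 - b) * x - c * x * (1 + x)) * kummerDensity a b c x) x := by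
  set L := (∫ t in Set.Ioi (0 : ℝ), KK a b c t)⁻¹ with hL
  have hx1 : (0 : ℝ) < 1 + x := by linarith
  -- derivative of the smooth representative
  have h1 : HasDerivAt (fun y : ℝ => y ^ a) (a * x ^ (a - 1)) x :=
    Real.hasDerivAt_rpow_const (Or.inl hx.ne')
  have hbase : HasDerivAt (fun y : ℝ => 1 + y) 1 x := by
    simpa using (hasDerivAt_id x).const_add (1 : ℝ)
  have h2 : HasDerivAt (fun y : ℝ => (1 + y) ^ (1 - a - b))
      (1 * (1 - a - b) * (1 + x) ^ (1 - a - b - 1)) x :=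
    hbase.rpow_const (Or.inl hx1.ne')
  have h3 : HasDerivAt (fun y : ℝ => Real.exp (-(c * y))) (Real.exp (-(c * x)) * (-c)) x := by
    have hb : HasDerivAt (fun y : ℝ => -(c * y)) (-c) x := by
      simpa using ((hasDerivAt_id x).const_mul c).fun_neg
    simpa [mul_comm] using hb.exp
  have hG := (h1.fun_mul h2).fun_mul h3
  -- the representative agrees with our function near x
  have heq : (fun y => y * (1 + y) * kummerDensity a b c y) =ᶠ[nhds x]
      (fun y : ℝ => L * (y ^ a * (1 + y) ^ (1 - a - b) * Real.exp (-(c * y)))) := by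
    filter_upwards [Ioi_mem_nhds hx] with y hy
    have hy0 : (0 : ℝ) < y := hy
    have hy1 : (0 : ℝ) < 1 + y := by linarith
    have e1 : y ^ a = y ^ (1 : ℝ) * y ^ (a - 1) := by
      rw [← Real.rpow_add hy0]; norm_num
    have e2 : (1 + y) ^ (1 - a - b) = (1 + y) ^ (1 : ℝ) * (1 + y) ^ (-a - b) := by
      rw [← Real.rpow_add hy1]; congr 1; ring
    rw [kummerDensity_eq, ← hL, e1, e2, Real.rpow_one, Real.rpow_one]
    unfold KK
    ring
  have hG' := (hG.const_mul L).congr_of_eventuallyEq heq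
  refine hG'.congr_deriv ?_
  have e1 : x ^ a = x ^ (1 : ℝ) * x ^ (a - 1) := by
    rw [← Real.rpow_add hx]; norm_num
  have e2 : (1 + x) ^ (1 - a - b) = (1 + x) ^ (1 : ℝ) * (1 + x) ^ (-a - b) := by
    rw [← Real.rpow_add hx1]; congr 1; ring
  have e3 : (1 + x) ^ (1 - a - b - 1) = (1 + x) ^ (-a - b) := by
    congr 1; ring
  rw [kummerDensity_eq, ← hL, e3, e1, e2, Real.rpow_one, Real.rpow_one]
  unfold KK
  ring

lemma integral_withDensity_kd {a b c : ℝ} (ha : 0 < a) (hc : 0 < c) (φ : ℝ → ℝ) :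
    ∫ x, φ x ∂((volume.restrict (Set.Ioi 0)).withDensity
        (fun x => ENNReal.ofReal (kummerDensity a b c x))) =
      ∫ x in Ioi (0 : ℝ), φ x * kummerDensity a b c x := by
  have hmeas : Measurable (fun x => (kummerDensity a b c x).toNNReal) :=
    (kd_meas a b c).real_toNNReal
  have h0 : (fun x => ENNReal.ofReal (kummerDensity a b c x)) =
      fun x => ((kummerDensity a b c x).toNNReal : ℝ≥0∞) := rfl
  rw [h0, integral_withDensity_eq_integral_smul hmeas]
  refine setIntegral_congr_fun measurableSet_Ioi fun x hx => ?_
  rw [NNReal.smul_def, Real.coe_toNNReal _ (kd_pos ha hc hx).le, smul_eq_mul, mul_comm]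

lemma integrable_withDensity_kd {a b c : ℝ} (ha : 0 < a) (hc : 0 < c) {φ : ℝ → ℝ}
    (h : Integrable φ ((volume.restrict (Set.Ioi 0)).withDensity
        (fun x => ENNReal.ofReal (kummerDensity a b c x)))) :
    IntegrableOn (fun x => φ x * kummerDensity a b c x) (Ioi 0) := by
  rw [integrable_withDensity_iff ((kd_meas a b c).ennreal_ofReal)
      (ae_of_all _ fun x => ENNReal.ofReal_lt_top)] at h
  apply h.congr
  filter_upwards [ae_restrict_mem measurableSet_Ioi] with x hx
  rw [ENNReal.toReal_ofReal (kd_pos ha hc hx).le]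

lemma forward {a b c : ℝ} (ha : 0 < a) (hc : 0 < c) (f : ℝ → ℝ)
    (hdiff : ∀ x ∈ Set.Ioi (0 : ℝ), DifferentiableAt ℝ f x)
    (h0 : Tendsto (fun x => x * (1 + x) * kummerDensity a b c x * f x)
      (nhdsWithin 0 (Set.Ioi 0)) (nhds 0))
    (htop : Tendsto (fun x => x * (1 + x) * kummerDensity a b c x * f x) atTop (nhds 0))
    (hint : Integrable (fun x =>
        x * (1 + x) * deriv f x + ((1 - b) * x - c * x * (1 + x) + a) * f x)
      ((volume.restrict (Set.Ioi 0)).withDensity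
        (fun x => ENNReal.ofReal (kummerDensity a b c x)))) :
    ∫ x, (x * (1 + x) * deriv f x + ((1 - b) * x - c * x * (1 + x) + a) * f x)
      ∂((volume.restrict (Set.Ioi 0)).withDensity
        (fun x => ENNReal.ofReal (kummerDensity a b c x))) = 0 := by
  set k := kummerDensity a b c with hk
  set φ := fun x => x * (1 + x) * deriv f x + ((1 - b) * x - c * x * (1 + x) + a) * f x with hφ
  set F := fun x => x * (1 + x) * k x * f x with hF
  rw [integral_withDensity_kd ha hc φ]
  have hder : ∀ x ∈ Ioi (0 : ℝ), HasDerivAt F (φ x * k x) x := by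
    intro x hx
    have h1 := hasDerivAt_g (a := a) (b := b) (c := c) hx
    have h2 := (hdiff x hx).hasDerivAt
    have h3 := h1.fun_mul h2
    refine h3.congr_deriv ?_
    rw [hφ]
    ring
  have hint' : IntegrableOn (fun x => φ x * k x) (Ioi 0) := integrable_withDensity_kd ha hc hint
  have hF0 : F 0 = 0 := by rw [hF]; ring
  have hcont : ContinuousWithinAt F (Ici 0) 0 := by
    have h1 : Tendsto F (nhdsWithin 0 (Ici 0)) (nhds 0) := by
      rw [← Set.Ioi_insert, nhdsWithin_insert]
      exact tendsto_sup.mpr ⟨by simpa [hF0] using tendsto_pure_nhds F 0, h0⟩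
    unfold ContinuousWithinAt
    rwa [hF0]
  have hres := integral_Ioi_of_hasDerivAt_of_tendsto hcont hder hint' htop
  rw [hres, hF0, sub_zero]

lemma stein_integral_eq {a b c : ℝ} (ha : 0 < a) (hc : 0 < c)
    (μ : Measure ℝ) [IsProbabilityMeasure μ] (hμ : μ (Set.Ioi 0)ᶜ = 0)
    (H : ∀ f : ℝ → ℝ, (∀ x ∈ Set.Ioi (0 : ℝ), DifferentiableAt ℝ f x) →
        Tendsto (fun x => x * (1 + x) * kummerDensity a b c x * f x)
          (nhdsWithin 0 (Set.Ioi 0)) (nhds 0) →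
        Tendsto (fun x => x * (1 + x) * kummerDensity a b c x * f x) atTop (nhds 0) →
        Integrable (fun x =>
          x * (1 + x) * deriv f x + ((1 - b) * x - c * x * (1 + x) + a) * f x) μ →
        ∫ x, (x * (1 + x) * deriv f x
          + ((1 - b) * x - c * x * (1 + x) + a) * f x) ∂μ = 0)
    (h : ℝ → ℝ) (hcont : Continuous h) (Cb : ℝ) (hbd : ∀ x, |h x| ≤ Cb) :
    ∫ x, h x ∂μ = ∫ x in Ioi (0 : ℝ), h x * kummerDensity a b c x := by
  set k := kummerDensity a b c with hk
  set m := ∫ x in Ioi (0 : ℝ), h x * k x with hm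
  set q : ℝ → ℝ := fun t => (h t - m) * k t with hq
  have hk_int : IntegrableOn k (Ioi 0) := kd_integrableOn ha hc
  have hq_meas : Measurable q := by
    have h1 := kd_meas a b c
    rw [hq, hk]
    fun_prop
  have hhm_int : IntegrableOn (fun t => h t * k t) (Ioi 0) := by
    refine Integrable.bdd_mul (c := Cb) hk_int (hcont.aestronglyMeasurable.restrict) ?_
    exact ae_of_all _ fun x => by simpa using hbd x
  have hq_int : IntegrableOn q (Ioi 0) := by
    rw [hq]
    simp_rw [sub_mul]
    exact hhm_int.sub (hk_int.const_mul m)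
  have hq_total : ∫ t in Ioi (0 : ℝ), q t = 0 := by
    rw [hq]
    simp_rw [sub_mul]
    rw [integral_sub hhm_int (hk_int.const_mul m), ← hm,
      MeasureTheory.integral_const_mul, kd_integral_one ha hc, mul_one, sub_self]
  set F0 : ℝ → ℝ := fun x => ∫ t in (0 : ℝ)..x, q t with hF0
  set g0 : ℝ → ℝ := fun x => x * (1 + x) * k x with hg0
  set f : ℝ → ℝ := fun x => F0 x / g0 x with hf
  have hg0_pos : ∀ x : ℝ, 0 < x → 0 < g0 x := fun x hx =>
    mul_pos (mul_pos hx (by linarith)) (kd_pos ha hc hx)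
  have hF0der : ∀ x : ℝ, 0 < x → HasDerivAt F0 (q x) x := by
    intro x hx
    apply intervalIntegral.integral_hasDerivAt_right
    · rw [intervalIntegrable_iff_integrableOn_Ioc_of_le hx.le]
      exact hq_int.mono_set fun t ht => ht.1
    · exact hq_meas.stronglyMeasurable.stronglyMeasurableAtFilter
    · rw [hq, hk]
      exact (hcont.continuousAt.sub continuousAt_const).mul (kd_contAt hx)
  have hfder : ∀ x : ℝ, 0 < x → HasDerivAt f
      ((q x * g0 x - F0 x * ((a + (1 - b) * x - c * x * (1 + x)) * k x)) / g0 x ^ 2) x := by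
    intro x hx
    exact (hF0der x hx).div (hasDerivAt_g hx) (hg0_pos x hx).ne'
  have hdiff : ∀ x ∈ Set.Ioi (0 : ℝ), DifferentiableAt ℝ f x := fun x hx =>
    (hfder x hx).differentiableAt
  have key : ∀ x : ℝ, 0 < x →
      x * (1 + x) * deriv f x + ((1 - b) * x - c * x * (1 + x) + a) * f x = h x - m := by
    intro x hx
    rw [(hfder x hx).deriv]
    have hkx : k x ≠ 0 := (kd_pos ha hc hx).ne'
    have hx0 : x ≠ 0 := hx.ne'
    have hx1 : (1 : ℝ) + x ≠ 0 := by positivity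
    rw [hf, hg0, hq]
    field_simp
    ring
  have hgff : ∀ x : ℝ, 0 < x → x * (1 + x) * k x * f x = F0 x := by
    intro x hx
    rw [hf, hg0]
    have hkx : k x ≠ 0 := (kd_pos ha hc hx).ne'
    field_simp [(hg0_pos x hx).ne']
  have h0lim : Tendsto (fun x => x * (1 + x) * k x * f x)
      (nhdsWithin 0 (Set.Ioi 0)) (nhds 0) := by
    have hC : ContinuousOn (fun x => ∫ t in Ioc (0 : ℝ) x, q t) (Icc 0 1) :=
      intervalIntegral.continuousOn_primitive
        ((integrableOn_Icc_iff_integrableOn_Ioc (by simp)).mpr (hq_int.mono_set Ioc_subset_Ioi_self))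
    have h1 : Tendsto (fun x => ∫ t in Ioc (0 : ℝ) x, q t)
        (nhdsWithin 0 (Icc 0 1)) (nhds 0) := by
      have h2 := hC 0 ⟨le_refl 0, zero_le_one⟩
      have h3 : (fun x => ∫ t in Ioc (0 : ℝ) x, q t) 0 = 0 := by simp
      unfold ContinuousWithinAt at h2
      rwa [h3] at h2
    have h2 : Tendsto (fun x => ∫ t in Ioc (0 : ℝ) x, q t)
        (nhdsWithin 0 (Ioi 0)) (nhds 0) := by
      refine h1.mono_left ?_
      rw [← nhdsWithin_Ioc_eq_nhdsGT zero_lt_one]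
      exact nhdsWithin_mono _ Ioc_subset_Icc_self
    refine h2.congr' ?_
    filter_upwards [self_mem_nhdsWithin] with x hx
    rw [hgff x hx]
    show ∫ t in Ioc (0 : ℝ) x, q t = ∫ t in (0 : ℝ)..x, q t
    exact (intervalIntegral.integral_of_le (le_of_lt hx)).symm
  have htoplim : Tendsto (fun x => x * (1 + x) * k x * f x) atTop (nhds 0) := by
    have h1 : Tendsto F0 atTop (nhds (∫ t in Ioi (0 : ℝ), q t)) :=
      intervalIntegral_tendsto_integral_Ioi 0 hq_int tendsto_id
    rw [hq_total] at h1
    refine h1.congr' ?_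
    filter_upwards [eventually_gt_atTop (0 : ℝ)] with x hx
    exact (hgff x hx).symm
  have hae : ∀ᵐ x ∂μ, x ∈ Set.Ioi (0 : ℝ) := by
    rw [ae_iff]
    have : {x : ℝ | ¬ x ∈ Set.Ioi (0 : ℝ)} = (Set.Ioi (0 : ℝ))ᶜ := rfl
    rw [this]
    exact hμ
  have hH_int : Integrable h μ := by
    refine (integrable_const Cb).mono' hcont.aestronglyMeasurable ?_
    exact ae_of_all _ fun x => by simpa using hbd x
  have hbint : Integrable (fun x => h x - m) μ := hH_int.sub (integrable_const m)
  have hintμ : Integrable (fun x =>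
      x * (1 + x) * deriv f x + ((1 - b) * x - c * x * (1 + x) + a) * f x) μ := by
    refine hbint.congr ?_
    filter_upwards [hae] with x hx
    exact (key x hx).symm
  have hzero := H f hdiff h0lim htoplim hintμ
  have h2 : ∫ x, (h x - m) ∂μ = 0 := by
    rw [integral_congr_ae (g := fun x =>
      x * (1 + x) * deriv f x + ((1 - b) * x - c * x * (1 + x) + a) * f x)]
    · exact hzero
    · filter_upwards [hae] with x hx
      exact (key x hx).symm
  rw [integral_sub hH_int (integrable_const m), integral_const, probReal_univ] at h2
  simp only [ENNReal.toReal_one, one_smul] at h2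
  rw [hm] at h2
  linarith [h2]

end KummerAux

theorem kummer_stein_characterization (a b c : ℝ) (ha : 0 < a) (hc : 0 < c)
    (μ : Measure ℝ) [IsProbabilityMeasure μ] (hμ : μ (Set.Ioi 0)ᶜ = 0) :
    μ = (volume.restrict (Set.Ioi 0)).withDensity
          (fun x => ENNReal.ofReal (kummerDensity a b c x)) ↔
      ∀ f : ℝ → ℝ, (∀ x ∈ Set.Ioi (0 : ℝ), DifferentiableAt ℝ f x) →
        Tendsto (fun x => x * (1 + x) * kummerDensity a b c x * f x)
          (nhdsWithin 0 (Set.Ioi 0)) (nhds 0) →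
        Tendsto (fun x => x * (1 + x) * kummerDensity a b c x * f x) atTop (nhds 0) →
        Integrable (fun x =>
          x * (1 + x) * deriv f x + ((1 - b) * x - c * x * (1 + x) + a) * f x) μ →
        ∫ x, (x * (1 + x) * deriv f x
          + ((1 - b) * x - c * x * (1 + x) + a) * f x) ∂μ = 0 := by
  constructor
  · intro hμν f hdiff h0 htop hint
    rw [hμν] at hint ⊢
    exact KummerAux.forward ha hc f hdiff h0 htop hint
  · intro H
    set ν := (volume.restrict (Set.Ioi 0)).withDensity
        (fun x => ENNReal.ofReal (kummerDensity a b c x)) with hν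
    have hν_univ : ν Set.univ = 1 := by
      rw [hν, withDensity_apply _ MeasurableSet.univ, Measure.restrict_univ,
        ← ofReal_integral_eq_lintegral_ofReal (KummerAux.kd_integrableOn ha hc) ?_]
      · rw [KummerAux.kd_integral_one ha hc, ENNReal.ofReal_one]
      · filter_upwards [ae_restrict_mem measurableSet_Ioi] with x hx
        exact (KummerAux.kd_pos ha hc hx).le
    haveI : IsFiniteMeasure ν := ⟨by rw [hν_univ]; exact ENNReal.one_lt_top⟩
    apply ext_of_forall_lintegral_eq_of_IsFiniteMeasure
    intro F
    have hcont : Continuous (fun x : ℝ => (F x : ℝ)) :=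
      NNReal.continuous_coe.comp F.continuous
    have hbd : ∀ x, |((F x : ℝ))| ≤ ((nndist F 0 : ℝ≥0) : ℝ) := by
      intro x
      rw [abs_of_nonneg (F x).coe_nonneg]
      exact_mod_cast BoundedContinuousFunction.NNReal.upper_bound F x
    have hμint : Integrable (fun x : ℝ => (F x : ℝ)) μ :=
      BoundedContinuousFunction.integrable_of_nnreal μ F
    have hνint : Integrable (fun x : ℝ => (F x : ℝ)) ν :=
      BoundedContinuousFunction.integrable_of_nnreal ν F
    have hkey : ∫ x, ((F x : ℝ)) ∂μ =
        ∫ x in Set.Ioi (0 : ℝ), ((F x : ℝ)) * kummerDensity a b c x :=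
      KummerAux.stein_integral_eq ha hc μ hμ H _ hcont _ hbd
    have hν_eq : ∫ x, ((F x : ℝ)) ∂ν =
        ∫ x in Set.Ioi (0 : ℝ), ((F x : ℝ)) * kummerDensity a b c x :=
      KummerAux.integral_withDensity_kd ha hc _
    have l1 : ∫⁻ x, (F x : ℝ≥0∞) ∂μ = ENNReal.ofReal (∫ x, ((F x : ℝ)) ∂μ) := by
      rw [ofReal_integral_eq_lintegral_ofReal hμint
        (ae_of_all _ fun x => (F x).coe_nonneg)]
      simp only [ENNReal.ofReal_coe_nnreal]
    have l2 : ∫⁻ x, (F x : ℝ≥0∞) ∂ν = ENNReal.ofReal (∫ x, ((F x : ℝ)) ∂ν) := by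
      rw [ofReal_integral_eq_lintegral_ofReal hνint
        (ae_of_all _ fun x => (F x).coe_nonneg)]
      simp only [ENNReal.ofReal_coe_nnreal]
    rw [l1, l2, hkey, hν_eq]
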